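/- arXiv:2207.14152 — 3 statements merged into one kernel-verified Lean document; each statement's English description precedes it below -/
import Mathlib

section
/- Let a < b be real numbers, t > 0, and let μ be the Borel measure on ℝ with density t·1_{[a,b]} (i.e., constant density t on the closed interval [a, b] and 0 elsewhere). Then for every positive integer n, the set { a + (2j − 1)(b − a)/(2n) : 1 ≤ j ≤ n } is an optimal set of n-means for μ, and the n-th quantization error of μ is V_n(μ) = (b − a)³ t / (12 n²). -/
open MeasureTheory Set

/-- Distortion error of a set `α` with respect to the measure `Q`. -/
noncomputable def distortion (Q : Measure ℝ) (α : Set ℝ) : ℝ :=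
  ∫ x, sInf ((fun a => (x - a) ^ 2) '' α) ∂Q

/-- The `n`-th quantization error of the measure `Q`. -/
noncomputable def quantErr (Q : Measure ℝ) (n : ℕ) : ℝ :=
  sInf { v : ℝ | ∃ α : Set ℝ, α.Finite ∧ α.Nonempty ∧ α.ncard ≤ n ∧ v = distortion Q α }

/-- `α` is an optimal set of `n`-means for `Q`. -/
def IsOptimal (Q : Measure ℝ) (n : ℕ) (α : Set ℝ) : Prop :=
  α.Finite ∧ 1 ≤ α.ncard ∧ α.ncard ≤ n ∧ distortion Q α = quantErr Q n

/-- The measure on `ℝ` with constant density `t` on `[a, b]` and `0` elsewhere. -/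
noncomputable def unif (a b t : ℝ) : Measure ℝ :=
  volume.withDensity fun x => ENNReal.ofReal ((Icc a b).indicator (fun _ => t) x)

lemma unif_eq (a b t : ℝ) (ht : 0 ≤ t) :
    unif a b t = (ENNReal.ofReal t) • volume.restrict (Icc a b) := by
  rw [unif]
  have : (fun x => ENNReal.ofReal ((Icc a b).indicator (fun _ => t) x))
      = (Icc a b).indicator (fun _ => ENNReal.ofReal t) := by
    funext x
    by_cases hx : x ∈ Icc a b <;> simp [indicator_apply, hx]
  rw [this, withDensity_indicator measurableSet_Icc, withDensity_const]

variable {s : Finset ℝ} (hs : s.Nonempty)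

noncomputable def dd (s : Finset ℝ) (hs : s.Nonempty) (x : ℝ) : ℝ :=
  s.inf' hs fun c => |x - c|

lemma dd_nonneg (x : ℝ) : 0 ≤ dd s hs x :=
  Finset.le_inf' hs _ fun c _ => abs_nonneg _

lemma dd_le {c : ℝ} (hc : c ∈ s) (x : ℝ) : dd s hs x ≤ |x - c| := Finset.inf'_le _ hc

lemma sq_dd (x : ℝ) : s.inf' hs (fun c => (x - c) ^ 2) = dd s hs x ^ 2 := by
  apply le_antisymm
  · obtain ⟨c, hc, hceq⟩ := Finset.exists_mem_eq_inf' hs fun c => |x - c|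
    calc s.inf' hs (fun c => (x - c) ^ 2) ≤ (x - c) ^ 2 := Finset.inf'_le _ hc
    _ = dd s hs x ^ 2 := by rw [dd, hceq, sq_abs]
  · rw [Finset.le_inf'_iff]
    intro c hc
    rw [← sq_abs (x - c)]
    exact pow_le_pow_left₀ (dd_nonneg hs x) (dd_le hs hc x) 2

lemma dist_cont : Continuous (dd s hs) := by
  apply Continuous.finset_inf'_apply hs
  intro c _
  continuity

lemma distortion_eq (Q : Measure ℝ) :
    distortion Q ↑s = ∫ x, dd s hs x ^ 2 ∂Q := by
  unfold distortion
  congr 1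
  funext x
  rw [← Finset.inf'_eq_csInf_image s hs, sq_dd hs]

lemma unif_univ (a b t : ℝ) (hab : a ≤ b) (ht : 0 ≤ t) :
    unif a b t univ = ENNReal.ofReal (t * (b - a)) := by
  rw [unif_eq a b t ht]
  simp [Measure.restrict_apply, Real.volume_Icc, ← ENNReal.ofReal_mul ht]

lemma integrable_sq_dd (a b t : ℝ) (s : Finset ℝ) (hs : s.Nonempty) :
    Integrable (fun x => dd s hs x ^ 2) (unif a b t) := by
  rcases le_or_gt t 0 with h | h
  · have : unif a b t = 0 := by
      rw [unif]
      have : (fun x => ENNReal.ofReal ((Icc a b).indicator (fun _ => t) x)) = fun _ => 0 := by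
        funext x
        by_cases hx : x ∈ Icc a b <;> simp [indicator_apply, hx, ENNReal.ofReal_eq_zero.2 h]
      simp [this]
    simp [this]
  · rw [unif_eq a b t h.le]
    refine Integrable.smul_measure ?_ ENNReal.ofReal_ne_top
    exact ((dist_cont hs).pow 2).integrableOn_Icc

lemma lower_bound (a b t : ℝ) (hab : a < b) (ht : 0 < t) (s : Finset ℝ) (hs : s.Nonempty) :
    (b - a) ^ 3 * t / (12 * (s.card : ℝ) ^ 2) ≤ distortion (unif a b t) ↑s := by
  set μ := unif a b t with hμ
  set L := b - a with hL
  have hL0 : 0 < L := by simp [hL]; linarith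
  set k : ℝ := (s.card : ℝ) with hk
  have hk0 : 0 < k := by
    have := Finset.card_pos.2 hs
    positivity
  set R := L / (2 * k) with hR
  have hR0 : 0 < R := by positivity
  set V := L ^ 3 * t / (12 * k ^ 2) with hV
  have hV0 : 0 < V := by positivity
  -- key measure bound
  have hmeas_le : ∀ r : ℝ, 0 < r → μ {x | dd s hs x ≤ r} ≤ ENNReal.ofReal (t * (2 * k * r)) := by
    intro r hr
    have hsub : {x | dd s hs x ≤ r} ⊆ ⋃ c ∈ s, Icc (c - r) (c + r) := by
      intro x hx
      obtain ⟨c, hc, hceq⟩ := Finset.exists_mem_eq_inf' hs fun c => |x - c|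
      have : |x - c| ≤ r := by rw [← hceq]; exact hx
      rw [abs_le] at this
      exact mem_biUnion hc ⟨by linarith [this.1], by linarith [this.2]⟩
    calc μ {x | dd s hs x ≤ r} ≤ μ (⋃ c ∈ s, Icc (c - r) (c + r)) := measure_mono hsub
      _ ≤ ∑ c ∈ s, μ (Icc (c - r) (c + r)) := measure_biUnion_finset_le _ _
      _ ≤ ∑ c ∈ s, ENNReal.ofReal t * ENNReal.ofReal (2 * r) := by
          refine Finset.sum_le_sum fun c _ => ?_
          rw [hμ, unif_eq a b t ht.le]
          simp only [Measure.smul_apply, smul_eq_mul]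
          refine mul_le_mul_right ?_ _
          calc volume.restrict (Icc a b) (Icc (c - r) (c + r))
              ≤ volume (Icc (c - r) (c + r)) := Measure.restrict_le_self _
            _ = ENNReal.ofReal (2 * r) := by rw [Real.volume_Icc]; ring_nf
      _ = ENNReal.ofReal (t * (2 * k * r)) := by
          rw [Finset.sum_const, ← ENNReal.ofReal_mul ht.le]
          rw [nsmul_eq_mul, ← ENNReal.ofReal_natCast, ← ENNReal.ofReal_mul (by positivity)]
          congr 1
          rw [hk]; ring
  have hμuniv : μ univ = ENNReal.ofReal (t * L) := unif_univ a b t hab.le ht.le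
  have hμfin : IsFiniteMeasure μ := ⟨by rw [hμuniv]; exact ENNReal.ofReal_lt_top⟩
  have hmeas_gt : ∀ r : ℝ, 0 < r →
      ENNReal.ofReal (t * (L - 2 * k * r)) ≤ μ {x | r < dd s hs x} := by
    intro r hr
    have hset : {x | r < dd s hs x} = {x | dd s hs x ≤ r}ᶜ := by
      ext x; simp [not_le]
    have hm : MeasurableSet {x | dd s hs x ≤ r} :=
      measurableSet_le (dist_cont hs).measurable measurable_const
    rw [hset, measure_compl hm (measure_ne_top μ _), hμuniv]
    calc ENNReal.ofReal (t * (L - 2 * k * r))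
        = ENNReal.ofReal (t * L - t * (2 * k * r)) := by ring_nf
      _ ≤ ENNReal.ofReal (t * L) - ENNReal.ofReal (t * (2 * k * r)) := by
          rw [ENNReal.ofReal_sub _ (by positivity)]
      _ ≤ ENNReal.ofReal (t * L) - μ {x | dd s hs x ≤ r} :=
          tsub_le_tsub_left (hmeas_le r hr) _
  -- layer cake
  have hlayer : ∫⁻ x, ENNReal.ofReal (dd s hs x ^ 2) ∂μ
      = ∫⁻ r in Ioi 0, μ {x | r < dd s hs x} * ENNReal.ofReal (2 * r) := by
    have := lintegral_comp_eq_lintegral_meas_lt_mul μ (f := dd s hs) (g := fun r => 2 * r)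
      (Filter.Eventually.of_forall (dd_nonneg hs)) (dist_cont hs).aemeasurable
      (fun r _ => (continuous_const.mul continuous_id).intervalIntegrable 0 r)
      ((ae_restrict_iff' measurableSet_Ioi).2 (Filter.Eventually.of_forall
        fun r hr => by simp at hr; positivity))
    rw [← this]
    congr 1
    funext x
    congr 1
    rw [intervalIntegral.integral_const_mul, integral_id]
    ring
  -- compute the comparison integral
  have hpoly : ∀ r : ℝ, t * (L - 2 * k * r) * (2 * r) = (2 * t * L) * r - (4 * t * k) * r ^ 2 := by
    intro r; ring
  have hcont : Continuous fun r : ℝ => t * (L - 2 * k * r) * (2 * r) := by continuity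
  have hint : ∫ r in Ioc (0:ℝ) R, t * (L - 2 * k * r) * (2 * r) = V := by
    rw [← intervalIntegral.integral_of_le hR0.le]
    have h1 : IntervalIntegrable (fun r : ℝ => (2 * t * L) * r) volume 0 R :=
      (continuous_const.mul continuous_id).intervalIntegrable _ _
    have h2 : IntervalIntegrable (fun r : ℝ => (4 * t * k) * r ^ 2) volume 0 R :=
      (continuous_const.mul (continuous_pow 2)).intervalIntegrable _ _
    calc ∫ r in (0:ℝ)..R, t * (L - 2 * k * r) * (2 * r)
        = ∫ r in (0:ℝ)..R, ((2 * t * L) * r - (4 * t * k) * r ^ 2) := by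
          congr 1; funext r; rw [hpoly]
      _ = (2 * t * L) * ((R ^ 2 - 0 ^ 2) / 2) - (4 * t * k) * ((R ^ 3 - 0 ^ 3) / 3) := by
          rw [intervalIntegral.integral_sub h1 h2, intervalIntegral.integral_const_mul,
            intervalIntegral.integral_const_mul, integral_id, integral_pow]
          norm_num
      _ = V := by
          rw [hV, hR]
          field_simp
          ring
  have hnn : 0 ≤ᵐ[volume.restrict (Ioc (0:ℝ) R)] fun r => t * (L - 2 * k * r) * (2 * r) := by
    refine (ae_restrict_iff' measurableSet_Ioc).2 (Filter.Eventually.of_forall fun r hr => ?_)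
    obtain ⟨hr1, hr2⟩ := hr
    have : 0 ≤ L - 2 * k * r := by
      rw [hR] at hr2
      have : 2 * k * r ≤ 2 * k * (L / (2 * k)) := by
        apply mul_le_mul_of_nonneg_left hr2 (by positivity)
      rw [mul_div_cancel₀ _ (by positivity)] at this
      linarith
    positivity
  have hchain : ENNReal.ofReal V ≤ ∫⁻ x, ENNReal.ofReal (dd s hs x ^ 2) ∂μ := by
    calc ENNReal.ofReal V
        = ∫⁻ r in Ioc (0:ℝ) R, ENNReal.ofReal (t * (L - 2 * k * r) * (2 * r)) := by
          rw [← hint]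
          exact ofReal_integral_eq_lintegral_ofReal (hcont.integrableOn_Ioc) hnn
      _ ≤ ∫⁻ r in Ioc (0:ℝ) R, μ {x | r < dd s hs x} * ENNReal.ofReal (2 * r) := by
          refine lintegral_mono fun r => ?_
          rcases le_or_gt r 0 with hr | hr
          · have h1 : 0 ≤ L - 2 * k * r := by nlinarith [mul_nonneg hk0.le (neg_nonneg.2 hr)]
            have hfac : 0 ≤ t * (L - 2 * k * r) := mul_nonneg ht.le h1
            have h0 : t * (L - 2 * k * r) * (2 * r) ≤ 0 :=
              mul_nonpos_of_nonneg_of_nonpos hfac (by linarith)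
            rw [ENNReal.ofReal_eq_zero.2 h0]
            exact zero_le
          · rw [show t * (L - 2 * k * r) * (2 * r) = (t * (L - 2 * k * r)) * (2 * r) by ring,
              ENNReal.ofReal_mul' (by linarith)]
            exact mul_le_mul_left (hmeas_gt r hr) _
      _ ≤ ∫⁻ r in Ioi (0:ℝ), μ {x | r < dd s hs x} * ENNReal.ofReal (2 * r) :=
          lintegral_mono_set Ioc_subset_Ioi_self
      _ = ∫⁻ x, ENNReal.ofReal (dd s hs x ^ 2) ∂μ := hlayer.symm
  have hdist : distortion μ ↑s = ∫ x, dd s hs x ^ 2 ∂μ := distortion_eq hs μ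
  have hofReal : ENNReal.ofReal (∫ x, dd s hs x ^ 2 ∂μ)
      = ∫⁻ x, ENNReal.ofReal (dd s hs x ^ 2) ∂μ :=
    ofReal_integral_eq_lintegral_ofReal (integrable_sq_dd a b t s hs)
      (Filter.Eventually.of_forall fun x => sq_nonneg _)
  rw [hdist]
  have := hchain
  rw [← hofReal] at this
  have hnn2 : 0 ≤ ∫ x, dd s hs x ^ 2 ∂μ := integral_nonneg fun x => sq_nonneg _
  rw [ENNReal.ofReal_le_ofReal_iff hnn2] at this
  calc L ^ 3 * t / (12 * k ^ 2) = V := by rw [hV]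
    _ ≤ ∫ x, dd s hs x ^ 2 ∂μ := this

lemma upper_bound (a b t : ℝ) (hab : a < b) (ht : 0 < t) (n : ℕ) (hn : 0 < n)
    (s : Finset ℝ) (hs : s.Nonempty)
    (hmem : ∀ i : ℕ, i < n → (a + (2 * ((i:ℝ) + 1) - 1) * (b - a) / (2 * n)) ∈ s) :
    distortion (unif a b t) ↑s ≤ (b - a) ^ 3 * t / (12 * (n : ℝ) ^ 2) := by
  set μ := unif a b t with hμ
  set L := b - a with hL
  have hL0 : 0 < L := by simp [hL]; linarith
  have hn0 : (0:ℝ) < n := by exact_mod_cast hn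
  set xk : ℕ → ℝ := fun i => a + i * L / n with hxk
  have hxk_le : ∀ i : ℕ, xk i ≤ xk (i + 1) := by
    intro i
    simp only [hxk]
    have : (i:ℝ) * L / n ≤ ((i:ℝ) + 1) * L / n := by
      gcongr
      linarith
    push_cast
    linarith
  have hxk0 : xk 0 = a := by simp [hxk]
  have hxkn : xk n = b := by
    simp only [hxk, hL]
    field_simp
    ring
  have hcont : Continuous fun x => dd s hs x ^ 2 := (dist_cont hs).pow 2
  have hintgr : ∀ i : ℕ, IntervalIntegrable (fun x => dd s hs x ^ 2) volume (xk i) (xk (i+1)) :=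
    fun i => hcont.intervalIntegrable _ _
  have key : ∀ i : ℕ, i < n →
      ∫ x in (xk i)..(xk (i+1)), dd s hs x ^ 2 ≤ L ^ 3 / (12 * (n:ℝ) ^ 3) := by
    intro i hi
    set c := a + (2 * ((i:ℝ) + 1) - 1) * L / (2 * n) with hc
    have hcs : c ∈ s := hmem i hi
    have hstep1 : ∫ x in (xk i)..(xk (i+1)), dd s hs x ^ 2
        ≤ ∫ x in (xk i)..(xk (i+1)), (x - c) ^ 2 := by
      apply intervalIntegral.integral_mono_on (hxk_le i) (hintgr i)
        (((continuous_id.sub continuous_const).pow 2).intervalIntegrable _ _)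
      intro x _
      calc dd s hs x ^ 2 = s.inf' hs (fun c => (x - c) ^ 2) := (sq_dd hs x).symm
        _ ≤ (x - c) ^ 2 := Finset.inf'_le _ hcs
    have hstep2 : ∫ x in (xk i)..(xk (i+1)), (x - c) ^ 2 = L ^ 3 / (12 * (n:ℝ) ^ 3) := by
      rw [intervalIntegral.integral_comp_sub_right (fun x => x ^ 2) c, integral_pow]
      have e1 : xk (i+1) - c = L / (2 * n) := by
        simp only [hxk, hc]
        push_cast
        field_simp
        ring
      have e2 : xk i - c = -(L / (2 * n)) := by
        simp only [hxk, hc]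
        push_cast
        field_simp
        ring
      rw [e1, e2]
      field_simp
      have hn3 : (n:ℝ) ^ 3 * (n:ℝ)⁻¹ ^ 3 = 1 := by rw [← mul_pow, mul_inv_cancel₀ hn0.ne', one_pow]
      linear_combination (L ^ 3 * 3) * hn3
    linarith
  have hsum : ∫ x in a..b, dd s hs x ^ 2 ≤ L ^ 3 / (12 * (n:ℝ) ^ 2) := by
    rw [← hxk0, ← hxkn, ← intervalIntegral.sum_integral_adjacent_intervals (fun i _ => hintgr i)]
    calc ∑ i ∈ Finset.range n, ∫ x in (xk i)..(xk (i+1)), dd s hs x ^ 2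
        ≤ ∑ i ∈ Finset.range n, L ^ 3 / (12 * (n:ℝ) ^ 3) :=
          Finset.sum_le_sum fun i hi => key i (Finset.mem_range.1 hi)
      _ = n * (L ^ 3 / (12 * (n:ℝ) ^ 3)) := by rw [Finset.sum_const]; simp [nsmul_eq_mul]
      _ = L ^ 3 / (12 * (n:ℝ) ^ 2) := by field_simp
  rw [distortion_eq hs, hμ, unif_eq a b t ht.le, integral_smul_measure,
    ENNReal.toReal_ofReal ht.le]
  rw [smul_eq_mul, integral_Icc_eq_integral_Ioc, ← intervalIntegral.integral_of_le hab.le]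
  calc t * ∫ x in a..b, dd s hs x ^ 2 ≤ t * (L ^ 3 / (12 * (n:ℝ) ^ 2)) := by
        exact mul_le_mul_of_nonneg_left hsum ht.le
    _ = L ^ 3 * t / (12 * (n:ℝ) ^ 2) := by ring

theorem stmt_2 (a b t : ℝ) (hab : a < b) (ht : 0 < t) (n : ℕ) (hn : 0 < n) :
    IsOptimal (unif a b t) n
      {x : ℝ | ∃ j : ℕ, 1 ≤ j ∧ j ≤ n ∧ x = a + (2 * (j : ℝ) - 1) * (b - a) / (2 * n)} ∧
    quantErr (unif a b t) n = (b - a) ^ 3 * t / (12 * n ^ 2) := by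
  set μ := unif a b t with hμ
  set V := (b - a) ^ 3 * t / (12 * (n:ℝ) ^ 2) with hV
  have hn0 : (0:ℝ) < n := by exact_mod_cast hn
  have hL0 : (0:ℝ) < b - a := by linarith
  set g : ℕ → ℝ := fun j => a + (2 * (j : ℝ) - 1) * (b - a) / (2 * n) with hg
  set s : Finset ℝ := (Finset.Icc 1 n).image g with hsdef
  have hginj : Set.InjOn g ↑(Finset.Icc 1 n) := by
    intro i _ j _ hij
    simp only [hg] at hij
    field_simp at hij
    have h2 : ((i:ℝ) - j) * (b - a) = 0 := by linarith
    rcases mul_eq_zero.1 h2 with h | h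
    · exact_mod_cast (sub_eq_zero.1 h)
    · linarith
  have hscard : s.card = n := by
    rw [hsdef, Finset.card_image_of_injOn hginj, Nat.card_Icc]
    omega
  have hs : s.Nonempty := by
    rw [← Finset.card_pos, hscard]; exact hn
  have hset : {x : ℝ | ∃ j : ℕ, 1 ≤ j ∧ j ≤ n ∧ x = a + (2 * (j : ℝ) - 1) * (b - a) / (2 * n)}
      = ↑s := by
    ext x
    simp only [hsdef, Finset.coe_image, mem_image, Finset.mem_coe, Finset.mem_Icc,
      mem_setOf_eq, hg]
    constructor
    · rintro ⟨j, h1, h2, h3⟩; exact ⟨j, ⟨h1, h2⟩, h3.symm⟩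
    · rintro ⟨j, ⟨h1, h2⟩, h3⟩; exact ⟨j, h1, h2, h3.symm⟩
  have hncard : ({x : ℝ | ∃ j : ℕ, 1 ≤ j ∧ j ≤ n ∧
      x = a + (2 * (j : ℝ) - 1) * (b - a) / (2 * n)}).ncard = n := by
    rw [hset, Set.ncard_coe_finset, hscard]
  -- upper bound
  have hub : distortion μ ↑s ≤ V := by
    apply upper_bound a b t hab ht n hn s hs
    intro i hi
    rw [hsdef]
    refine Finset.mem_image.2 ⟨i + 1, Finset.mem_Icc.2 ⟨by omega, by omega⟩, ?_⟩
    simp only [hg]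
    push_cast
    ring
  -- lower bound for all admissible sets
  have hlb : ∀ v ∈ { v : ℝ | ∃ α : Set ℝ, α.Finite ∧ α.Nonempty ∧ α.ncard ≤ n ∧
      v = distortion μ α }, V ≤ v := by
    rintro v ⟨α, hfin, hne, hcard, rfl⟩
    set s' : Finset ℝ := hfin.toFinset with hs'def
    have hcoe : ↑s' = α := hfin.coe_toFinset
    have hs'ne : s'.Nonempty := by
      rw [← Finset.coe_nonempty, hcoe]; exact hne
    have hcard' : s'.card ≤ n := by
      rwa [← Set.ncard_coe_finset, hcoe]
    have hcard0 : 0 < s'.card := Finset.card_pos.2 hs'ne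
    have h1 := lower_bound a b t hab ht s' hs'ne
    rw [← hcoe]
    refine le_trans ?_ h1
    rw [hV]
    apply div_le_div_of_nonneg_left (by positivity) (by positivity)
    have : ((s'.card : ℝ)) ≤ (n:ℝ) := by exact_mod_cast hcard'
    have hc0 : (0:ℝ) < (s'.card : ℝ) := by exact_mod_cast hcard0
    nlinarith
  have hmemS : distortion μ ↑s ∈ { v : ℝ | ∃ α : Set ℝ, α.Finite ∧ α.Nonempty ∧ α.ncard ≤ n ∧
      v = distortion μ α } := by
    refine ⟨↑s, s.finite_toSet, by rwa [Finset.coe_nonempty], ?_, rfl⟩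
    rw [Set.ncard_coe_finset, hscard]
  have hdistV : distortion μ ↑s = V := le_antisymm hub (hlb _ hmemS)
  have hquant : quantErr μ n = V := by
    rw [quantErr]
    apply le_antisymm
    · exact csInf_le ⟨V, fun v hv => hlb v hv⟩ (hdistV ▸ hmemS)
    · exact le_csInf ⟨_, hmemS⟩ hlb
  refine ⟨⟨?_, ?_, ?_, ?_⟩, hquant⟩
  · rw [hset]; exact s.finite_toSet
  · rw [hncard]; exact hn
  · rw [hncard]
  · rw [hset, hdistV, hquant]
end

section
/- Let a < b be real numbers, t > 0, and let μ be the Borel measure on ℝ with density t·1_{[a,b]}. Let n be a positive integer and let β = {a₁ < a₂ < ⋯ < a_n < b} be a set of n + 1 points that minimizes the distortion error V(μ; ·) among all (n + 1)-point subsets of ℝ that contain the endpoint b. Then a_j = a + (2j − 1)(b − a₁)/(2n) for 1 ≤ j ≤ n, and the distortion error of β equals V(μ; β) = t(b − a₁)³/(12 n²) + t(a₁ − a)³/3. -/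
open MeasureTheory Set

lemma cont_inf' {ι : Type*} (s : Finset ι) (hs : s.Nonempty) (g : ι → ℝ → ℝ)
    (hg : ∀ i, Continuous (g i)) : Continuous fun x => s.inf' hs fun i => g i x := by
  induction hs using Finset.Nonempty.cons_induction with
  | singleton a => simpa using hg a
  | cons a s ha hs ih =>
      simp only [Finset.inf'_cons (H := hs)]
      exact (hg a).min ih

lemma sInf_sq_range {m : ℕ} (c : Fin (m + 1) → ℝ) (x : ℝ) :
    sInf ((fun a => (x - a) ^ 2) '' Set.range c) =
      Finset.univ.inf' Finset.univ_nonempty fun j => (x - c j) ^ 2 := by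
  obtain ⟨j0, -, hj0⟩ := Finset.exists_mem_eq_inf' (Finset.univ_nonempty) fun j => (x - c j) ^ 2
  apply IsLeast.csInf_eq
  constructor
  · exact ⟨c j0, ⟨j0, rfl⟩, hj0.symm⟩
  · rintro y ⟨u, ⟨j, rfl⟩, rfl⟩
    exact Finset.inf'_le _ (Finset.mem_univ j)

lemma unif_eq_smul (a b t : ℝ) :
    unif a b t = ENNReal.ofReal t • volume.restrict (Icc a b) := by
  have h1 : (fun x => ENNReal.ofReal ((Icc a b).indicator (fun _ => t) x)) =
      (Icc a b).indicator (fun _ => ENNReal.ofReal t) := by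
    funext x
    by_cases hx : x ∈ Icc a b <;> simp [hx]
  rw [unif, h1, withDensity_indicator measurableSet_Icc, withDensity_const]

lemma D2I {m : ℕ} (a b t : ℝ) (ht : 0 ≤ t) (c : Fin (m + 1) → ℝ) :
    distortion (unif a b t) (Set.range c) =
      t * ∫ x in Icc a b, Finset.univ.inf' Finset.univ_nonempty fun j => (x - c j) ^ 2 := by
  rw [distortion, unif_eq_smul, integral_smul_measure]
  have h : (fun x => sInf ((fun a => (x - a) ^ 2) '' Set.range c)) =
      fun x => Finset.univ.inf' Finset.univ_nonempty fun j => (x - c j) ^ 2 :=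
    funext fun x => sInf_sq_range c x
  rw [h, ENNReal.toReal_ofReal ht, smul_eq_mul]


noncomputable def brk {n : ℕ} (a b : ℝ) (c : Fin (n + 1) → ℝ) (k : ℕ) : ℝ :=
  if k = 0 then a else if h : k ≤ n then (c ⟨k - 1, by omega⟩ + c ⟨k, by omega⟩) / 2 else b

lemma brk_zero {n : ℕ} (a b : ℝ) (c : Fin (n + 1) → ℝ) : brk a b c 0 = a := by simp [brk]

lemma brk_top {n : ℕ} (a b : ℝ) (c : Fin (n + 1) → ℝ) : brk a b c (n + 1) = b := by
  simp [brk]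

lemma brk_mid {n : ℕ} (a b : ℝ) (c : Fin (n + 1) → ℝ) (k : ℕ) (h1 : k ≠ 0) (h2 : k ≤ n) :
    brk a b c k = (c ⟨k - 1, by omega⟩ + c ⟨k, by omega⟩) / 2 := by
  simp [brk, h1, h2]

lemma int_sq (u v e : ℝ) :
    ∫ x in u..v, (x - e) ^ 2 = ((v - e) ^ 3 - (u - e) ^ 3) / 3 := by
  rw [intervalIntegral.integral_comp_sub_right (fun x => x ^ 2) e, integral_pow]
  norm_num

section EFL

variable {n : ℕ} {a b : ℝ} (c : Fin (n + 1) → ℝ)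

lemma cell_eq (hmono : Monotone c) (j : Fin (n + 1)) (x : ℝ)
    (hx1 : brk a b c j.val ≤ x) (hx2 : x ≤ brk a b c (j.val + 1)) :
    (Finset.univ.inf' Finset.univ_nonempty fun i => (x - c i) ^ 2) = (x - c j) ^ 2 := by
  apply le_antisymm (Finset.inf'_le _ (Finset.mem_univ j))
  apply Finset.le_inf'
  intro i _
  rcases lt_trichotomy (i : ℕ) (j : ℕ) with hij | hij | hij
  · -- i < j : use left endpoint
    have hj0 : (j : ℕ) ≠ 0 := by omega
    have hjn : (j : ℕ) ≤ n := by omega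
    rw [brk_mid a b c j.val hj0 hjn] at hx1
    have hm1 : c i ≤ c ⟨j.val - 1, by omega⟩ :=
      hmono (by rw [Fin.le_def]; show (i : ℕ) ≤ j.val - 1; omega)
    have hm2 : c i ≤ c j := hmono (by rw [Fin.le_def]; omega)
    have hmm : (⟨j.val, j.isLt⟩ : Fin (n + 1)) = j := rfl
    rw [hmm] at hx1
    nlinarith [mul_nonneg (sub_nonneg.2 hm2) (by linarith : (0:ℝ) ≤ 2 * x - c i - c j)]
  · have : i = j := Fin.ext hij
    rw [this]
  · -- j < i : use right endpoint
    have hjn : (j : ℕ) < n := by omega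
    rw [brk_mid a b c (j.val + 1) (by omega) (by omega)] at hx2
    have hm0 : (⟨j.val + 1 - 1, by omega⟩ : Fin (n + 1)) = j := by
      apply Fin.ext; show j.val + 1 - 1 = j.val; omega
    have hm2 : c ⟨j.val + 1, by omega⟩ ≤ c i :=
      hmono (by rw [Fin.le_def]; show j.val + 1 ≤ (i : ℕ); omega)
    have hm3 : c j ≤ c i := hmono (by rw [Fin.le_def]; omega)
    rw [hm0] at hx2
    nlinarith [mul_nonneg (sub_nonneg.2 hm3) (by linarith : (0:ℝ) ≤ c i + c j - 2 * x)]

lemma brk_sorted (hab : a ≤ b) (hmono : Monotone c) (h0 : a ≤ c 0)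
    (hlast : c (Fin.last n) = b) (k : ℕ) (hk : k ≤ n) :
    brk a b c k ≤ brk a b c (k + 1) := by
  have hca : ∀ j, a ≤ c j := fun j => h0.trans (hmono (Fin.zero_le j))
  have hcb : ∀ j, c j ≤ b := fun j => hlast ▸ hmono (Fin.le_last j)
  rcases Nat.eq_zero_or_pos k with rfl | hkpos
  · rw [brk_zero]
    rcases Nat.eq_zero_or_pos n with rfl | hnpos
    · rw [brk_top]; exact hab
    · rw [brk_mid a b c 1 one_ne_zero hnpos]
      have := hca ⟨0, by omega⟩
      have := hca ⟨1, by omega⟩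
      linarith
  · rcases eq_or_lt_of_le hk with rfl | hkn
    · rw [brk_top, brk_mid a b c k (by omega) hk]
      have := hcb ⟨k - 1, by omega⟩
      have := hcb ⟨k, by omega⟩
      linarith
    · rw [brk_mid a b c k (by omega) hk, brk_mid a b c (k + 1) (by omega) (by omega)]
      have h1 : c ⟨k - 1, by omega⟩ ≤ c ⟨k + 1 - 1, by omega⟩ := hmono (Fin.mk_le_mk.mpr (by omega))
      have h2 : c ⟨k, by omega⟩ ≤ c ⟨k + 1, by omega⟩ := hmono (Fin.mk_le_mk.mpr (by omega))
      linarith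

lemma EFL (hab : a ≤ b) (hmono : Monotone c) (h0 : a ≤ c 0) (hlast : c (Fin.last n) = b) :
    ∫ x in Icc a b, Finset.univ.inf' Finset.univ_nonempty (fun j => (x - c j) ^ 2) =
      (c 0 - a) ^ 3 / 3 + ∑ j : Fin n, (c j.succ - c j.castSucc) ^ 3 / 12 := by
  have hcont : Continuous fun x => Finset.univ.inf' Finset.univ_nonempty
      fun j : Fin (n + 1) => (x - c j) ^ 2 := by
    apply cont_inf'
    intro i
    continuity
  set F : ℝ → ℝ := fun x => Finset.univ.inf' Finset.univ_nonempty
      (fun j : Fin (n + 1) => (x - c j) ^ 2) with hF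
  have hint : ∀ k, k < n + 1 →
      IntervalIntegrable F volume (brk a b c k) (brk a b c (k + 1)) :=
    fun k _ => hcont.intervalIntegrable _ _
  have h1 : ∫ x in Icc a b, F x = ∫ x in a..b, F x := by
    rw [integral_Icc_eq_integral_Ioc, intervalIntegral.integral_of_le hab]
  rw [h1]
  have hends : (∫ x in a..b, F x) = ∫ x in (brk a b c 0)..(brk a b c (n + 1)), F x := by
    rw [brk_zero, brk_top]
  rw [hends, ← intervalIntegral.sum_integral_adjacent_intervals hint,
    ← Fin.sum_univ_eq_sum_range (fun k => ∫ x in (brk a b c k)..(brk a b c (k + 1)), F x) (n + 1)]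
  have hcell : ∀ j : Fin (n + 1), (∫ x in (brk a b c j.val)..(brk a b c (j.val + 1)), F x)
      = ((brk a b c (j.val + 1) - c j) ^ 3 - (brk a b c j.val - c j) ^ 3) / 3 := by
    intro j
    have heq : Set.EqOn F (fun x => (x - c j) ^ 2)
        (Set.uIcc (brk a b c j.val) (brk a b c (j.val + 1))) := by
      intro x hx
      rw [Set.uIcc_of_le (brk_sorted c hab hmono h0 hlast j.val (by omega))] at hx
      exact cell_eq c hmono j x hx.1 hx.2
    rw [intervalIntegral.integral_congr heq, int_sq]
  rw [Finset.sum_congr rfl fun j _ => hcell j]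
  have hsplit : ∑ j : Fin (n + 1),
        ((brk a b c (j.val + 1) - c j) ^ 3 - (brk a b c j.val - c j) ^ 3) / 3
      = (∑ j : Fin (n + 1), (brk a b c (j.val + 1) - c j) ^ 3 / 3)
        - ∑ j : Fin (n + 1), (brk a b c j.val - c j) ^ 3 / 3 := by
    rw [← Finset.sum_sub_distrib]; exact Finset.sum_congr rfl fun j _ => by ring
  rw [hsplit]
  have hA : ∑ j : Fin (n + 1), (brk a b c (j.val + 1) - c j) ^ 3 / 3
      = ∑ i : Fin n, (c i.succ - c i.castSucc) ^ 3 / 24 := by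
    rw [Fin.sum_univ_castSucc]
    have hlastterm : (brk a b c ((Fin.last n).val + 1) - c (Fin.last n)) ^ 3 / 3 = 0 := by
      rw [Fin.val_last, brk_top, hlast]; ring
    rw [hlastterm, add_zero]
    apply Finset.sum_congr rfl
    intro i _
    have h1' : (Fin.castSucc i).val = i.val := rfl
    rw [h1', brk_mid a b c (i.val + 1) (by omega) (by omega)]
    have e1 : (⟨i.val + 1 - 1, by omega⟩ : Fin (n + 1)) = i.castSucc :=
      Fin.ext (by show i.val + 1 - 1 = i.val; omega)
    have e2 : (⟨i.val + 1, by omega⟩ : Fin (n + 1)) = i.succ := rfl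
    rw [e1, e2]; ring
  have hB : ∑ j : Fin (n + 1), (brk a b c j.val - c j) ^ 3 / 3
      = -(c 0 - a) ^ 3 / 3 + ∑ i : Fin n, (-(c i.succ - c i.castSucc) ^ 3 / 24) := by
    rw [Fin.sum_univ_succ]
    have h0' : (brk a b c (0 : Fin (n + 1)).val - c 0) ^ 3 / 3 = -(c 0 - a) ^ 3 / 3 := by
      rw [show ((0 : Fin (n + 1)).val) = 0 from rfl, brk_zero]; ring
    rw [h0']
    congr 1
    apply Finset.sum_congr rfl
    intro i _
    have hv : (Fin.succ i).val = i.val + 1 := rfl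
    rw [hv, brk_mid a b c (i.val + 1) (by omega) (by omega)]
    have e1 : (⟨i.val + 1 - 1, by omega⟩ : Fin (n + 1)) = i.castSucc :=
      Fin.ext (by show i.val + 1 - 1 = i.val; omega)
    have e2 : (⟨i.val + 1, by omega⟩ : Fin (n + 1)) = i.succ := rfl
    rw [e1, e2]; ring
  rw [hA, hB]
  have hcomb : ∑ i : Fin n, (c i.succ - c i.castSucc) ^ 3 / 12
      = ∑ i : Fin n, ((c i.succ - c i.castSucc) ^ 3 / 24 - (-(c i.succ - c i.castSucc) ^ 3 / 24)) :=
    Finset.sum_congr rfl fun i _ => by ring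
  rw [hcomb, Finset.sum_sub_distrib]
  ring

end EFL


lemma key_ineq {n : ℕ} {L : ℝ} (hL : 0 < L) (e : ℝ) (d : Fin n → ℝ)
    (he : 0 ≤ e) (hd : ∀ j, 0 ≤ d j) (hsum : e + ∑ j, d j = L) :
    L ^ 3 / (3 * (2 * (n : ℝ) + 1) ^ 2) ≤ e ^ 3 / 3 + ∑ j, d j ^ 3 / 12 ∧
    (e ^ 3 / 3 + ∑ j, d j ^ 3 / 12 = L ^ 3 / (3 * (2 * (n : ℝ) + 1) ^ 2) →
      e = L / (2 * (n : ℝ) + 1) ∧ ∀ j, d j = 2 * L / (2 * (n : ℝ) + 1)) := by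
  have hK : (0 : ℝ) < 2 * (n : ℝ) + 1 := by positivity
  obtain ⟨v, hv⟩ : ∃ v : ℝ, v = 2 * L / (2 * (n : ℝ) + 1) := ⟨_, rfl⟩
  have hvpos : 0 < v := by rw [hv]; positivity
  have hterm : ∀ j, d j ^ 3 / 12 =
      (d j - v) ^ 2 * (d j + 2 * v) / 12 + v ^ 2 / 4 * d j - v ^ 3 / 6 := fun j => by ring
  have hsum3 : ∑ j, d j ^ 3 / 12 =
      (∑ j, (d j - v) ^ 2 * (d j + 2 * v) / 12) + v ^ 2 / 4 * (∑ j, d j)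
        - (n : ℝ) * (v ^ 3 / 6) := by
    rw [Finset.sum_congr rfl fun j _ => hterm j, Finset.sum_sub_distrib,
      Finset.sum_add_distrib, ← Finset.mul_sum, Finset.sum_const, Finset.card_univ]
    simp [nsmul_eq_mul]
  have hid : e ^ 3 / 3 + ∑ j, d j ^ 3 / 12 =
      (2 * e - v) ^ 2 * (2 * e + 2 * v) / 24
        + (∑ j, (d j - v) ^ 2 * (d j + 2 * v) / 12)
        + (v ^ 2 / 4 * (e + ∑ j, d j) - v ^ 3 * (2 * (n : ℝ) + 1) / 12) := by
    rw [hsum3]; ring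
  have hconst : v ^ 2 / 4 * L - v ^ 3 * (2 * (n : ℝ) + 1) / 12
      = L ^ 3 / (3 * (2 * (n : ℝ) + 1) ^ 2) := by
    rw [hv]; field_simp; ring
  rw [hsum, hconst] at hid
  have hA : 0 ≤ (2 * e - v) ^ 2 * (2 * e + 2 * v) / 24 := by positivity
  have hS : ∀ j ∈ Finset.univ, (0:ℝ) ≤ (d j - v) ^ 2 * (d j + 2 * v) / 12 := by
    intro j _
    have := hd j
    positivity
  have hSsum : 0 ≤ ∑ j, (d j - v) ^ 2 * (d j + 2 * v) / 12 := Finset.sum_nonneg hS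
  constructor
  · rw [hid]; linarith
  · intro heq
    rw [hid] at heq
    have hA0 : (2 * e - v) ^ 2 * (2 * e + 2 * v) / 24 = 0 := by linarith
    have hS0 : ∑ j, (d j - v) ^ 2 * (d j + 2 * v) / 12 = 0 := by linarith
    have hSj : ∀ j ∈ Finset.univ, (d j - v) ^ 2 * (d j + 2 * v) / 12 = 0 :=
      (Finset.sum_eq_zero_iff_of_nonneg hS).mp hS0
    constructor
    · have h1 : (2 * e - v) ^ 2 * (2 * e + 2 * v) = 0 := by linarith
      have h2 : 2 * e + 2 * v > 0 := by linarith
      have h3 : (2 * e - v) ^ 2 = 0 := by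
        rcases mul_eq_zero.mp h1 with h | h
        · exact h
        · linarith
      have h4 : 2 * e - v = 0 := by
        have := sq_eq_zero_iff.mp h3; linarith [this]
      rw [hv] at h4
      field_simp at h4 ⊢
      linarith
    · intro j
      have h1 : (d j - v) ^ 2 * (d j + 2 * v) = 0 := by
        have := hSj j (Finset.mem_univ j); linarith
      have h2 : d j + 2 * v > 0 := by linarith [hd j]
      have h3 : (d j - v) ^ 2 = 0 := by
        rcases mul_eq_zero.mp h1 with h | h
        · exact h
        · linarith
      have h4 : d j - v = 0 := sq_eq_zero_iff.mp h3
      rw [hv] at h4; linarith [h4]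

set_option maxHeartbeats 1000000 in
theorem stmt_3 (a b t : ℝ) (hab : a < b) (ht : 0 < t) (n : ℕ) (hn : 0 < n)
    (p : Fin n → ℝ) (hmono : StrictMono p) (hlt : ∀ j, p j < b)
    (hmin : ∀ γ : Set ℝ, γ.Finite → γ.ncard = n + 1 → b ∈ γ →
      distortion (unif a b t) (Set.range p ∪ {b}) ≤ distortion (unif a b t) γ) :
    (∀ j : Fin n, p j = a + (2 * ((j : ℕ) : ℝ) + 1) * (b - p ⟨0, hn⟩) / (2 * n)) ∧
    distortion (unif a b t) (Set.range p ∪ {b}) =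
      t * (b - p ⟨0, hn⟩) ^ 3 / (12 * n ^ 2) + t * (p ⟨0, hn⟩ - a) ^ 3 / 3 := by
  have hK : (0 : ℝ) < 2 * (n : ℝ) + 1 := by positivity
  have hKne : (2 * (n : ℝ) + 1) ≠ 0 := ne_of_gt hK
  have hL : (0 : ℝ) < b - a := by linarith
  set c : Fin (n + 1) → ℝ := Fin.snoc p b with hc
  have hcast : ∀ i : Fin n, c i.castSucc = p i := fun i => by rw [hc]; exact Fin.snoc_castSucc ..
  have hclast : c (Fin.last n) = b := by rw [hc]; exact Fin.snoc_last ..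
  have hcs : StrictMono c := by
    rw [Fin.strictMono_iff_lt_succ]
    intro i
    rw [hcast]
    by_cases h : (i : ℕ) + 1 < n
    · have e : i.succ = Fin.castSucc ⟨(i : ℕ) + 1, h⟩ := rfl
      rw [e, hcast]
      exact hmono (by simp [Fin.lt_def])
    · have e : i.succ = Fin.last n := Fin.ext (by simp [Fin.val_last]; omega)
      rw [e, hclast]
      exact hlt i
  have hrange : Set.range c = Set.range p ∪ {b} := by
    ext x
    constructor
    · rintro ⟨j, rfl⟩
      refine Fin.lastCases ?_ ?_ j
      · right; rw [hclast]; rfl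
      · intro i; left; exact ⟨i, (hcast i).symm⟩
    · rintro (⟨i, rfl⟩ | hx)
      · exact ⟨i.castSucc, hcast i⟩
      · exact ⟨Fin.last n, by rw [hclast]; exact hx.symm⟩
  -- clamped points
  set c' : Fin (n + 1) → ℝ := fun j => max (c j) a with hc'
  have hmono' : Monotone c' := fun i j hij => max_le_max (hcs.monotone hij) le_rfl
  have h0' : a ≤ c' 0 := le_max_right _ _
  have hlast' : c' (Fin.last n) = b := by rw [hc']; simp [hclast, max_eq_left hab.le]
  -- the competitor
  set q : Fin (n + 1) → ℝ :=
    fun j => a + (2 * ((j : ℕ) : ℝ) + 1) * (b - a) / (2 * (n : ℝ) + 1) with hq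
  have hqs : StrictMono q := by
    intro i j hij
    have hij' : (i : ℕ) < (j : ℕ) := hij
    have : ((i : ℕ) : ℝ) < ((j : ℕ) : ℝ) := by exact_mod_cast hij'
    apply add_lt_add_of_le_of_lt le_rfl
    apply div_lt_div_of_pos_right ?_ hK
    nlinarith
  have hq0 : a ≤ q 0 := by
    rw [hq]; simp only [Fin.val_zero, Nat.cast_zero]
    nlinarith [div_pos (by nlinarith : (0:ℝ) < (2 * 0 + 1) * (b - a)) hK]
  have hqlast : q (Fin.last n) = b := by
    rw [hq]; simp only [Fin.val_last]; field_simp; ring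
  have hqgap : ∀ i : Fin n, q i.succ - q i.castSucc = 2 * (b - a) / (2 * (n : ℝ) + 1) := by
    intro i
    rw [hq]; simp only [Fin.val_succ, Fin.coe_castSucc]
    push_cast
    field_simp
    ring
  -- distortion of the competitor
  have hDq : distortion (unif a b t) (Set.range q)
      = t * ((b - a) ^ 3 / (3 * (2 * (n : ℝ) + 1) ^ 2)) := by
    rw [D2I a b t ht.le q, EFL q hab.le hqs.monotone hq0 hqlast]
    congr 1
    rw [Finset.sum_congr rfl fun i _ => by rw [hqgap i]]
    rw [Finset.sum_const, Finset.card_univ, Fintype.card_fin, nsmul_eq_mul]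
    have hq0v : q 0 = a + (2 * (0:ℝ) + 1) * (b - a) / (2 * (n : ℝ) + 1) := by
      rw [hq]; norm_num
    rw [hq0v]
    field_simp
    ring
  -- apply minimality
  have hcardq : (Set.range q).ncard = n + 1 := by
    rw [← Set.image_univ, Set.ncard_image_of_injective _ hqs.injective, Set.ncard_univ]
    simp
  have hminq := hmin (Set.range q) (Set.finite_range q) hcardq ⟨Fin.last n, hqlast⟩
  rw [hDq] at hminq
  -- distortion of β as an integral
  have hDβ : distortion (unif a b t) (Set.range p ∪ {b})
      = t * ∫ x in Icc a b, Finset.univ.inf' Finset.univ_nonempty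
          fun j : Fin (n + 1) => (x - c j) ^ 2 := by
    rw [← hrange, D2I a b t ht.le c]
  -- pointwise comparison with clamped points
  have hptwise : ∀ x ∈ Icc a b,
      (Finset.univ.inf' Finset.univ_nonempty fun j : Fin (n + 1) => (x - c' j) ^ 2)
        ≤ Finset.univ.inf' Finset.univ_nonempty fun j : Fin (n + 1) => (x - c j) ^ 2 := by
    intro x hx
    obtain ⟨j0, -, hj0⟩ := Finset.exists_mem_eq_inf' (Finset.univ_nonempty (α := Fin (n + 1)))
      fun j => (x - c j) ^ 2
    rw [hj0]
    refine le_trans (Finset.inf'_le _ (Finset.mem_univ j0)) ?_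
    rcases le_or_gt a (c j0) with h | h
    · rw [hc']; simp only [max_eq_left h]; exact le_refl _
    · have hm : c' j0 = a := by rw [hc']; simp only [max_eq_right h.le]
      rw [hm]
      have hxa : a ≤ x := hx.1
      nlinarith [mul_nonneg (by linarith : (0:ℝ) ≤ a - c j0) (by linarith : (0:ℝ) ≤ 2 * x - a - c j0)]
  have hcontc : Continuous fun x => Finset.univ.inf' Finset.univ_nonempty
      fun j : Fin (n + 1) => (x - c j) ^ 2 := cont_inf' _ _ _ fun i => (continuous_id.sub continuous_const).pow 2
  have hcontc' : Continuous fun x => Finset.univ.inf' Finset.univ_nonempty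
      fun j : Fin (n + 1) => (x - c' j) ^ 2 := cont_inf' _ _ _ fun i => (continuous_id.sub continuous_const).pow 2
  have hcmp : (∫ x in Icc a b, Finset.univ.inf' Finset.univ_nonempty
        fun j : Fin (n + 1) => (x - c' j) ^ 2)
      ≤ ∫ x in Icc a b, Finset.univ.inf' Finset.univ_nonempty
        fun j : Fin (n + 1) => (x - c j) ^ 2 :=
    setIntegral_mono_on (hcontc'.integrableOn_Icc) (hcontc.integrableOn_Icc)
      measurableSet_Icc hptwise
  -- value of the clamped integral
  have hI' : (∫ x in Icc a b, Finset.univ.inf' Finset.univ_nonempty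
        fun j : Fin (n + 1) => (x - c' j) ^ 2)
      = (c' 0 - a) ^ 3 / 3 + ∑ i : Fin n, (c' i.succ - c' i.castSucc) ^ 3 / 12 :=
    EFL c' hab.le hmono' h0' hlast'
  -- telescoping sum
  have htel : (c' 0 - a) + ∑ i : Fin n, (c' i.succ - c' i.castSucc) = b - a := by
    have g : ∀ i : Fin n, c' i.succ - c' i.castSucc
        = (fun k : ℕ => c' ⟨min k n, by omega⟩) ((i : ℕ) + 1)
          - (fun k : ℕ => c' ⟨min k n, by omega⟩) (i : ℕ) := by
      intro i
      have e1 : (⟨min ((i : ℕ) + 1) n, by omega⟩ : Fin (n + 1)) = i.succ :=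
        Fin.ext (by show min ((i : ℕ) + 1) n = (i : ℕ) + 1; omega)
      have e2 : (⟨min (i : ℕ) n, by omega⟩ : Fin (n + 1)) = i.castSucc :=
        Fin.ext (by show min (i : ℕ) n = (i : ℕ); omega)
      simp only [e1, e2]
    rw [Finset.sum_congr rfl fun i _ => g i,
      Fin.sum_univ_eq_sum_range
        (fun k => (fun k : ℕ => c' ⟨min k n, by omega⟩) (k + 1)
          - (fun k : ℕ => c' ⟨min k n, by omega⟩) k) n,
      Finset.sum_range_sub (fun k : ℕ => c' ⟨min k n, by omega⟩) n]
    have e3 : (⟨min n n, by omega⟩ : Fin (n + 1)) = Fin.last n := Fin.ext (by simp)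
    have e4 : (⟨min 0 n, by omega⟩ : Fin (n + 1)) = 0 := Fin.ext (by simp)
    rw [e3, e4, hlast']
    ring
  -- key inequality
  have hkey := key_ineq hL (c' 0 - a) (fun i => c' i.succ - c' i.castSucc)
    (by linarith [h0'])
    (fun i => by
      have := hmono' (Fin.castSucc_lt_succ : i.castSucc < i.succ).le
      show (0:ℝ) ≤ c' i.succ - c' i.castSucc
      linarith)
    htel
  -- squeeze
  have hIβle : (∫ x in Icc a b, Finset.univ.inf' Finset.univ_nonempty
        fun j : Fin (n + 1) => (x - c j) ^ 2)
      ≤ (b - a) ^ 3 / (3 * (2 * (n : ℝ) + 1) ^ 2) := by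
    rw [hDβ] at hminq
    exact le_of_mul_le_mul_left hminq ht
  have heq' : (c' 0 - a) ^ 3 / 3 + ∑ i : Fin n, (c' i.succ - c' i.castSucc) ^ 3 / 12
      = (b - a) ^ 3 / (3 * (2 * (n : ℝ) + 1) ^ 2) := by
    have h1 := hkey.1
    rw [← hI'] at h1 ⊢
    linarith [hcmp, hIβle]
  obtain ⟨he0, hdj⟩ := hkey.2 heq'
  -- identify c' with q
  have hc'q : ∀ j : Fin (n + 1),
      c' j = a + (2 * ((j : ℕ) : ℝ) + 1) * (b - a) / (2 * (n : ℝ) + 1) := by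
    intro j
    induction j using Fin.induction with
    | zero =>
        simp only [Fin.val_zero, Nat.cast_zero]
        have : c' 0 = a + (b - a) / (2 * (n : ℝ) + 1) := by linarith [he0]
        rw [this]; ring
    | succ i ih =>
        have hd := hdj i
        have : c' i.succ = c' i.castSucc + 2 * (b - a) / (2 * (n : ℝ) + 1) := by linarith
        rw [this, ih]
        simp only [Fin.val_succ, Fin.coe_castSucc]
        push_cast
        field_simp
        ring
  -- c' j > a, hence c = c'
  have hcc' : ∀ j : Fin (n + 1), c j = c' j := by
    intro j
    have hqa : a < c' j := by
      rw [hc'q j]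
      have : 0 < (2 * ((j : ℕ) : ℝ) + 1) * (b - a) / (2 * (n : ℝ) + 1) := by positivity
      linarith
    rcases le_or_gt a (c j) with h | h
    · rw [hc']; simp [max_eq_left h]
    · exfalso
      have : c' j = a := by rw [hc']; simp [max_eq_right h.le]
      rw [this] at hqa
      exact lt_irrefl a hqa
  have hcq : ∀ j : Fin (n + 1),
      c j = a + (2 * ((j : ℕ) : ℝ) + 1) * (b - a) / (2 * (n : ℝ) + 1) := by
    intro j; rw [hcc' j, hc'q j]
  -- value of p 0
  have hp0 : p ⟨0, hn⟩ = a + (b - a) / (2 * (n : ℝ) + 1) := by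
    have e : (⟨0, hn⟩ : Fin n).castSucc = (0 : Fin (n + 1)) := rfl
    have := hcq 0
    rw [← e, hcast] at this
    rw [this]
    simp only [e, Fin.val_zero, Nat.cast_zero]
    ring
  have hnne : ((n : ℝ)) ≠ 0 := Nat.cast_ne_zero.mpr hn.ne'
  constructor
  · intro j
    have hj : p j = a + (2 * ((j : ℕ) : ℝ) + 1) * (b - a) / (2 * (n : ℝ) + 1) := by
      have := hcq j.castSucc
      rw [hcast] at this
      simpa using this
    rw [hj, hp0]
    field_simp
    ring
  · have hIβ : (∫ x in Icc a b, Finset.univ.inf' Finset.univ_nonempty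
        fun j : Fin (n + 1) => (x - c j) ^ 2)
        = (b - a) ^ 3 / (3 * (2 * (n : ℝ) + 1) ^ 2) := by
      apply le_antisymm hIβle
      calc (b - a) ^ 3 / (3 * (2 * (n : ℝ) + 1) ^ 2)
          ≤ (c' 0 - a) ^ 3 / 3 + ∑ i : Fin n, (c' i.succ - c' i.castSucc) ^ 3 / 12 := hkey.1
        _ = ∫ x in Icc a b, Finset.univ.inf' Finset.univ_nonempty
              fun j : Fin (n + 1) => (x - c' j) ^ 2 := hI'.symm
        _ ≤ _ := hcmp
    rw [hDβ, hIβ, hp0]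
    field_simp
    ring
end

section
/- Let a < b be real numbers, t > 0, and let μ be the Borel measure on ℝ with density t·1_{[a,b]}. Let n be a positive integer and let β = {a₁ < a₂ < ⋯ < a_n < b} be a set of n + 1 points that minimizes the distortion error V(μ; ·) among all (n + 1)-point subsets of ℝ that contain the endpoint b. Then the points a₁, …, a_n are equally spaced with a_{j+1} − a_j = 2(a₁ − a) for all 1 ≤ j ≤ n − 1 and b − a_n = 2(a₁ − a); equivalently, a₁, …, a_n are uniformly distributed over the closed interval [a, (a_n + b)/2] in the sense that a_j = a + (2j − 1)((a_n + b)/2 − a)/(2n) for 1 ≤ j ≤ n. -/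
open MeasureTheory Set
open scoped NNReal ENNReal

/- ### Auxiliary lemmas -/

lemma sInf_image_sq_eq {α : Set ℝ} (x c : ℝ) (hc : c ∈ α)
    (hmin : ∀ y ∈ α, (x - c) ^ 2 ≤ (x - y) ^ 2) :
    sInf ((fun a => (x - a) ^ 2) '' α) = (x - c) ^ 2 := by
  apply le_antisymm
  · exact csInf_le ⟨0, by rintro _ ⟨y, hy, rfl⟩; positivity⟩ ⟨c, hc, rfl⟩
  · exact le_csInf ⟨_, ⟨c, hc, rfl⟩⟩ (by rintro _ ⟨y, hy, rfl⟩; exact hmin y hy)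

lemma bdd_sq (β : Set ℝ) (x : ℝ) : BddBelow ((fun y => (x - y) ^ 2) '' β) :=
  ⟨0, by rintro _ ⟨y, _, rfl⟩; positivity⟩

lemma continuous_finset_sInf (s : Finset ℝ) (hs : s.Nonempty) :
    Continuous fun x : ℝ => sInf ((fun a => (x - a) ^ 2) '' (s : Set ℝ)) := by
  induction hs using Finset.Nonempty.cons_induction with
  | singleton a => simpa using (by fun_prop : Continuous fun x : ℝ => (x - a) ^ 2)
  | cons a s ha hs ih =>
      have : ∀ x : ℝ, sInf ((fun y => (x - y) ^ 2) '' ((Finset.cons a s ha : Finset ℝ) : Set ℝ))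
          = min ((x - a) ^ 2) (sInf ((fun y => (x - y) ^ 2) '' (s : Set ℝ))) := by
        intro x
        rw [Finset.coe_cons, Set.image_insert_eq, csInf_insert
          ((s.finite_toSet.image _).bddBelow) (hs.to_set.image _)]
      simp only [this]
      exact Continuous.min (by fun_prop) ih

lemma continuous_distFun {α : Set ℝ} (hfin : α.Finite) (hne : α.Nonempty) :
    Continuous fun x => sInf ((fun a => (x - a) ^ 2) '' α) := by
  have h := continuous_finset_sInf hfin.toFinset (by simpa using hne)
  simpa [hfin.coe_toFinset] using h

lemma distortion_eq_integral {a b t : ℝ} (hab : a ≤ b) (ht : 0 ≤ t) (α : Set ℝ) :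
    distortion (unif a b t) α = t * ∫ x in a..b, sInf ((fun y => (x - y) ^ 2) '' α) := by
  set g : ℝ → ℝ := fun x => sInf ((fun y => (x - y) ^ 2) '' α) with hg
  have hdens : (fun x => ENNReal.ofReal ((Icc a b).indicator (fun _ => t) x))
      = fun x => (((Icc a b).indicator (fun _ => t.toNNReal) x : ℝ≥0) : ℝ≥0∞) := by
    funext x
    by_cases h : x ∈ Icc a b <;> simp [h, ENNReal.ofReal]
  have hmeas : Measurable fun x => (Icc a b).indicator (fun _ => t.toNNReal) x :=
    Measurable.indicator measurable_const measurableSet_Icc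
  rw [distortion, unif, hdens, integral_withDensity_eq_integral_smul hmeas]
  have : (fun x => ((Icc a b).indicator (fun _ => t.toNNReal) x : ℝ≥0) • g x)
      = (Icc a b).indicator (fun x => t * g x) := by
    funext x
    by_cases h : x ∈ Icc a b <;>
      simp [h, NNReal.smul_def, Real.coe_toNNReal _ ht]
  rw [this, integral_indicator measurableSet_Icc, integral_Icc_eq_integral_Ioc,
    ← intervalIntegral.integral_of_le hab, intervalIntegral.integral_const_mul]

lemma ncard_image_Iic (m : ℕ) (d : ℕ → ℝ)
    (hmono : ∀ i j, i < j → j ≤ m + 1 → d i < d j) :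
    (d '' Set.Iic (m + 1)).ncard = m + 2 := by
  have hinj : Set.InjOn d (Set.Iic (m + 1)) := by
    intro i hi j hj hij
    by_contra hne'
    rcases Nat.lt_or_ge i j with h | h
    · exact absurd hij (ne_of_lt (hmono i j h hj))
    · have : j < i := by omega
      exact absurd hij.symm (ne_of_lt (hmono j i this hi))
  rw [Set.ncard_image_of_injOn hinj, ← Finset.coe_Iic, Set.ncard_coe_finset, Nat.card_Iic]

/- ### The explicit distortion formula -/

lemma distortion_formula {a b t : ℝ} (hab : a < b) (ht : 0 < t) (m : ℕ)
    (c : ℕ → ℝ) (hmono : ∀ i j, i < j → j ≤ m + 1 → c i < c j) (hcb : c (m + 1) = b)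
    (ha : 2 * a ≤ c 0 + c 1) :
    distortion (unif a b t) (c '' Set.Iic (m + 1))
      = t * (((c 0 - a) ^ 3
          + (1 / 4) * ∑ j ∈ Finset.range (m + 1), (c (j + 1) - c j) ^ 3) / 3) := by
  have hmono_le : ∀ i j, i ≤ j → j ≤ m + 1 → c i ≤ c j := by
    intro i j hij hj
    rcases eq_or_lt_of_le hij with rfl | h
    · exact le_rfl
    · exact (hmono _ _ h hj).le
  set M : ℕ → ℝ := fun j => if j = 0 then a else if j ≤ m + 1 then (c (j - 1) + c j) / 2 else b
    with hM
  have hM0 : M 0 = a := by simp [hM]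
  have hMlast : M (m + 2) = b := by
    have h1 : ¬(m + 2 = 0) := by omega
    have h2 : ¬(m + 2 ≤ m + 1) := by omega
    simp [hM, h1, h2]
  have hMmid : ∀ j, 1 ≤ j → j ≤ m + 1 → M j = (c (j - 1) + c j) / 2 := by
    intro j h1 h2
    have : ¬(j = 0) := by omega
    simp [hM, this, h2]
  have hML : ∀ j ≤ m + 1, M j ≤ M (j + 1) := by
    intro j hj
    rcases Nat.eq_zero_or_pos j with rfl | hj1
    · rw [hM0, hMmid 1 le_rfl (by omega)]
      simpa using by linarith
    · rcases eq_or_lt_of_le hj with rfl | hjlt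
      · rw [hMlast, hMmid (m + 1) (by omega) le_rfl]
        have := hmono m (m + 1) (by omega) le_rfl
        rw [hcb] at *
        simp only [Nat.add_sub_cancel]
        linarith
      · have hj' : j + 1 ≤ m + 1 := by omega
        rw [hMmid j hj1 hj, hMmid (j + 1) (by omega) hj']
        have h1 : c (j - 1) < c (j + 1) := hmono (j - 1) (j + 1) (by omega) hj'
        have h2 : (j + 1) - 1 = j := by omega
        rw [h2]
        linarith
  set g : ℝ → ℝ := fun x => sInf ((fun y => (x - y) ^ 2) '' (c '' Set.Iic (m + 1))) with hg
  have hfin : (c '' Set.Iic (m + 1)).Finite := (Set.finite_Iic _).image _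
  have hne : (c '' Set.Iic (m + 1)).Nonempty := ⟨c 0, ⟨0, by simp, rfl⟩⟩
  have gcont : Continuous g := continuous_distFun hfin hne
  have hcell : ∀ j ≤ m + 1, ∀ x ∈ Set.Icc (M j) (M (j + 1)), g x = (x - c j) ^ 2 := by
    intro j hj x hx
    refine sInf_image_sq_eq x (c j) ⟨j, hj, rfl⟩ ?_
    rintro y ⟨k, hk, rfl⟩
    simp only [Set.mem_Iic] at hk hj
    rcases lt_trichotomy k j with hkj | rfl | hkj
    · have hj1 : 1 ≤ j := by omega
      have hck : c k ≤ c (j - 1) := hmono_le k (j - 1) (by omega) (by omega)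
      have hxM : (c (j - 1) + c j) / 2 ≤ x := by
        rw [← hMmid j hj1 hj]; exact hx.1
      have hcc : c k ≤ c j := hmono_le k j hkj.le hj
      nlinarith [mul_nonneg (sub_nonneg.2 hcc) (by linarith : (0:ℝ) ≤ 2 * x - c k - c j)]
    · exact le_rfl
    · have hj1 : j + 1 ≤ m + 1 := by omega
      have hck : c (j + 1) ≤ c k := hmono_le (j + 1) k (by omega) hk
      have hxM : x ≤ (c j + c (j + 1)) / 2 := by
        have := hx.2
        rwa [hMmid (j + 1) (by omega) hj1, Nat.add_sub_cancel] at this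
      have hcc : c j ≤ c k := hmono_le j k hkj.le hk
      nlinarith [mul_nonneg (sub_nonneg.2 hck) (by linarith : (0:ℝ) ≤ c k + c j - 2 * x)]
  have hint : ∀ k < m + 2, IntervalIntegrable g volume (M k) (M (k + 1)) :=
    fun k _ => gcont.intervalIntegrable _ _
  have hsum : ∑ k ∈ Finset.range (m + 2), ∫ x in M k..M (k + 1), g x
      = ∫ x in a..b, g x := by
    rw [intervalIntegral.sum_integral_adjacent_intervals hint, hM0, hMlast]
  have hpiece : ∀ j ≤ m + 1, (∫ x in M j..M (j + 1), g x)
      = ((M (j + 1) - c j) ^ 3 - (M j - c j) ^ 3) / 3 := by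
    intro j hj
    have h1 : (∫ x in M j..M (j + 1), g x) = ∫ x in M j..M (j + 1), (x - c j) ^ 2 := by
      apply intervalIntegral.integral_congr
      intro x hx
      rw [Set.uIcc_of_le (hML j hj)] at hx
      exact hcell j hj x hx
    rw [h1]
    have h2 : (∫ x in M j..M (j + 1), (x - c j) ^ 2)
        = ∫ x in M j - c j..M (j + 1) - c j, x ^ 2 :=
      intervalIntegral.integral_comp_sub_right (fun x => x ^ 2) (c j)
    rw [h2, integral_pow]
    norm_num
  rw [distortion_eq_integral hab.le ht.le, ← hg, ← hsum,
    Finset.sum_congr rfl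
      (fun j hj => hpiece j (by simpa using Nat.lt_succ_iff.mp (Finset.mem_range.mp hj)))]
  congr 1
  rw [← Finset.sum_div]
  congr 1
  set q : ℕ → ℝ := fun j => ((c (j + 1) - c j) / 2) ^ 3 with hqdef
  have hS : ∑ j ∈ Finset.range (m + 2), ((M (j + 1) - c j) ^ 3 - (M j - c j) ^ 3)
      = 2 * ∑ j ∈ Finset.range (m + 1), q j + (c 0 - a) ^ 3 := by
    rw [Finset.sum_range_succ]
    have hlast : (M (m + 1 + 1) - c (m + 1)) ^ 3 - (M (m + 1) - c (m + 1)) ^ 3 = q m := by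
      rw [hMlast, hMmid (m + 1) (by omega) le_rfl, Nat.add_sub_cancel]
      simp only [hqdef, hcb]
      ring
    rw [hlast]
    have hcong : ∀ j ∈ Finset.range (m + 1), (M (j + 1) - c j) ^ 3 - (M j - c j) ^ 3
        = q j - (M j - c j) ^ 3 := by
      intro j hj
      have hj' : j + 1 ≤ m + 1 := by
        have := Finset.mem_range.mp hj; omega
      rw [hMmid (j + 1) (by omega) hj', Nat.add_sub_cancel]
      simp only [hqdef]
      ring
    rw [Finset.sum_congr rfl hcong, Finset.sum_sub_distrib]
    have h2 : ∑ j ∈ Finset.range (m + 1), (M j - c j) ^ 3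
        = ∑ j ∈ Finset.range m, (-(q j)) + (a - c 0) ^ 3 := by
      rw [Finset.sum_range_succ', hM0]
      congr 1
      apply Finset.sum_congr rfl
      intro j hj
      rw [hMmid (j + 1) (by omega) (by have := Finset.mem_range.mp hj; omega),
        Nat.add_sub_cancel]
      simp only [hqdef]
      ring
    rw [h2, Finset.sum_neg_distrib, Finset.sum_range_succ]
    ring
  rw [hS]
  have h8 : ∀ j ∈ Finset.range (m + 1), (c (j + 1) - c j) ^ 3 = 8 * q j := by
    intro j _; simp only [hqdef]; ring
  rw [Finset.sum_congr rfl h8, ← Finset.mul_sum]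
  ring

/- ### The endpoint condition `2a ≤ c 0 + c 1` -/

lemma key_ha (a b t : ℝ) (hab : a < b) (ht : 0 < t) (m : ℕ) (c : ℕ → ℝ)
    (hmono : ∀ i j, i < j → j ≤ m + 1 → c i < c j) (hcb : c (m + 1) = b)
    (hmin : ∀ γ : Set ℝ, γ.Finite → γ.ncard = m + 2 → b ∈ γ →
      distortion (unif a b t) (c '' Set.Iic (m + 1)) ≤ distortion (unif a b t) γ) :
    2 * a ≤ c 0 + c 1 := by
  by_contra hcon
  push_neg at hcon
  have hmono_le : ∀ i j, i ≤ j → j ≤ m + 1 → c i ≤ c j := by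
    intro i j hij hj
    rcases eq_or_lt_of_le hij with rfl | h
    · exact le_rfl
    · exact (hmono _ _ h hj).le
  set z : ℝ := (max (c m) a + b) / 2 with hz
  have hcmb : c m < b := by
    have := hmono m (m + 1) (by omega) le_rfl; rwa [hcb] at this
  have hmaxb : max (c m) a < b := max_lt hcmb hab
  have hz1 : a < z := by
    have : a ≤ max (c m) a := le_max_right _ _
    rw [hz]; linarith
  have hz2 : z < b := by rw [hz]; linarith
  have hzc : ∀ j ≤ m + 1, c j ≠ z := by
    intro j hj
    rcases eq_or_lt_of_le hj with rfl | h
    · rw [hcb]; exact ne_of_gt hz2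
    · have h1 : c j ≤ c m := hmono_le j m (by omega) (by omega)
      have h2 : c m ≤ max (c m) a := le_max_left _ _
      have : z > max (c m) a := by rw [hz]; linarith
      exact ne_of_lt (by linarith)
  set α : Set ℝ := c '' Set.Iic (m + 1) with hα
  have hfin : α.Finite := (Set.finite_Iic _).image _
  have hne : α.Nonempty := ⟨c 0, ⟨0, by simp, rfl⟩⟩
  have hcard : α.ncard = m + 2 := ncard_image_Iic m c hmono
  set γ' : Set ℝ := (α \ {c 0}) ∪ {z} with hγ'
  have hzα : z ∉ α := by rintro ⟨j, hj, hje⟩; exact hzc j hj hje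
  have hc0α : c 0 ∈ α := ⟨0, by simp, rfl⟩
  have hfin' : γ'.Finite := hfin.diff.union (Set.finite_singleton _)
  have hcard' : γ'.ncard = m + 2 := by
    rw [hγ', Set.union_singleton, Set.ncard_insert_of_notMem (by simp [hzα]) hfin.diff,
      Set.ncard_diff_singleton_of_mem hc0α, hcard]
    omega
  have hbγ' : b ∈ γ' := by
    left
    refine ⟨⟨m + 1, by simp, hcb⟩, ?_⟩
    simp only [Set.mem_singleton_iff]
    have := hmono 0 (m + 1) (by omega) le_rfl
    rw [hcb] at this
    intro h; rw [h] at this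
    have := hmono 0 1 (by omega) (by omega)
    linarith [hcon]
  have hne' : γ'.Nonempty := ⟨z, Or.inr rfl⟩
  have hc01 : c 0 < c 1 := hmono 0 1 (by omega) (by omega)
  have hc1γ' : c 1 ∈ γ' := by
    left
    exact ⟨⟨1, by simp, rfl⟩, by simp only [Set.mem_singleton_iff]; exact ne_of_gt hc01⟩
  set g : ℝ → ℝ := fun x => sInf ((fun y => (x - y) ^ 2) '' α) with hgdef
  set g' : ℝ → ℝ := fun x => sInf ((fun y => (x - y) ^ 2) '' γ') with hg'def
  have hle : ∀ x ∈ Set.Ioc a b, g' x ≤ g x := by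
    intro x hx
    apply le_csInf (hne.image _)
    rintro v ⟨y, hyα, rfl⟩
    obtain ⟨k, hk, rfl⟩ := hyα
    simp only [Set.mem_Iic] at hk
    rcases Nat.eq_zero_or_pos k with rfl | hk1
    · have h1 : g' x ≤ (x - c 1) ^ 2 := csInf_le (bdd_sq γ' x) ⟨c 1, hc1γ', rfl⟩
      have h2 : (x - c 1) ^ 2 ≤ (x - c 0) ^ 2 := by nlinarith [hx.1]
      show g' x ≤ (x - c 0) ^ 2
      linarith
    · have hckγ' : c k ∈ γ' := by
        left
        refine ⟨⟨k, hk, rfl⟩, ?_⟩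
        simp only [Set.mem_singleton_iff]
        exact ne_of_gt (hmono 0 k hk1 hk)
      exact csInf_le (bdd_sq γ' x) ⟨c k, hckγ', rfl⟩
  have hg'z : g' z = 0 := by
    have := sInf_image_sq_eq z z (show z ∈ γ' from Set.mem_union_right _ rfl)
      (fun y _ => by nlinarith [sq_nonneg (z - y)])
    rw [hg'def]
    simpa using this
  have hgz : 0 < g z := by
    obtain ⟨y, ⟨k, hk, rfl⟩, hEq⟩ :=
      Set.Nonempty.csInf_mem (hne.image (fun y => (z - y) ^ 2)) (hfin.image _)
    simp only [Set.mem_Iic] at hk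
    have hgz' : g z = (z - c k) ^ 2 := hEq.symm
    rw [hgz']
    have hzk : z - c k ≠ 0 := sub_ne_zero.mpr (Ne.symm (hzc k hk))
    exact lt_of_le_of_ne (sq_nonneg _) (Ne.symm (pow_ne_zero 2 hzk))
  have hcont : Continuous g := continuous_distFun hfin hne
  have hcont' : Continuous g' := continuous_distFun hfin' hne'
  have hint := intervalIntegral.integral_lt_integral_of_continuousOn_of_le_of_exists_lt hab
    hcont'.continuousOn hcont.continuousOn hle ⟨z, ⟨hz1.le, hz2.le⟩, by rw [hg'z]; exact hgz⟩
  have h1 := hmin γ' hfin' hcard' hbγ'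
  rw [distortion_eq_integral hab.le ht.le α, distortion_eq_integral hab.le ht.le γ'] at h1
  have := mul_lt_mul_of_pos_left hint ht
  rw [← hgdef, ← hg'def] at h1
  linarith

/- ### Sum manipulation lemmas for perturbed configurations -/

lemma sum_update_zero (m : ℕ) (c : ℕ → ℝ) (s : ℝ) :
    ∑ j ∈ Finset.range (m + 1),
        ((Function.update c 0 s) (j + 1) - (Function.update c 0 s) j) ^ 3
      = ∑ j ∈ Finset.range (m + 1), (c (j + 1) - c j) ^ 3 - (c 1 - c 0) ^ 3 + (c 1 - s) ^ 3 := by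
  rw [Finset.sum_range_succ'
      (fun j => ((Function.update c 0 s) (j + 1) - (Function.update c 0 s) j) ^ 3),
    Finset.sum_range_succ' (fun j => (c (j + 1) - c j) ^ 3)]
  have h1 : ∀ j : ℕ, (Function.update c 0 s) (j + 1) = c (j + 1) := fun j =>
    Function.update_of_ne (by omega) _ _
  simp only [h1, Function.update_self]
  ring

lemma sum_update_mid (m k : ℕ) (hk1 : 1 ≤ k) (hk2 : k ≤ m) (c : ℕ → ℝ) (s : ℝ) :
    ∑ j ∈ Finset.range (m + 1),
        ((Function.update c k s) (j + 1) - (Function.update c k s) j) ^ 3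
      = ∑ j ∈ Finset.range (m + 1), (c (j + 1) - c j) ^ 3
        - (c k - c (k - 1)) ^ 3 - (c (k + 1) - c k) ^ 3
        + (s - c (k - 1)) ^ 3 + (c (k + 1) - s) ^ 3 := by
  set u := Function.update c k s with hu
  have hmem1 : k - 1 ∈ Finset.range (m + 1) := Finset.mem_range.mpr (by omega)
  have hmem2 : k ∈ (Finset.range (m + 1)).erase (k - 1) :=
    Finset.mem_erase.mpr ⟨by omega, Finset.mem_range.mpr (by omega)⟩
  have expand : ∀ f : ℕ → ℝ, ∑ j ∈ Finset.range (m + 1), f j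
      = f (k - 1) + (f k + ∑ j ∈ ((Finset.range (m + 1)).erase (k - 1)).erase k, f j) := by
    intro f
    rw [Finset.add_sum_erase _ f hmem2, Finset.add_sum_erase _ f hmem1]
  rw [expand (fun j => (u (j + 1) - u j) ^ 3), expand (fun j => (c (j + 1) - c j) ^ 3)]
  have hcong : ∀ j ∈ ((Finset.range (m + 1)).erase (k - 1)).erase k,
      (u (j + 1) - u j) ^ 3 = (c (j + 1) - c j) ^ 3 := by
    intro j hj
    obtain ⟨hjk, hjk1, _⟩ := by
      simpa [Finset.mem_erase, and_assoc] using hj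
    rw [hu, Function.update_of_ne hjk, Function.update_of_ne (by omega)]
  rw [Finset.sum_congr rfl hcong]
  have e1 : u (k - 1 + 1) = s := by
    rw [hu]
    have h : k - 1 + 1 = k := by omega
    rw [h, Function.update_self]
  have e2 : u (k - 1) = c (k - 1) := Function.update_of_ne (by omega) _ _
  have e3 : u (k + 1) = c (k + 1) := Function.update_of_ne (by omega) _ _
  have e4 : u k = s := Function.update_self _ _ _
  have e5 : c (k - 1 + 1) = c k := by congr 1; omega
  rw [e1, e2, e3, e4, e5]
  ring

/- ### Algebraic minimization lemmas -/

lemma interior_alg {u v x : ℝ} (hux : u < x) (hxv : x < v)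
    (h : (x - u) ^ 3 + (v - x) ^ 3 ≤ ((u + v) / 2 - u) ^ 3 + (v - (u + v) / 2) ^ 3) :
    2 * x = u + v := by
  have huv : 0 < v - u := by linarith
  have h2 : (v - u) * (2 * x - u - v) ^ 2 ≤ 0 := by nlinarith
  have h3 : (2 * x - u - v) ^ 2 ≤ 0 := by nlinarith [sq_nonneg (2 * x - u - v)]
  have h4 : (2 * x - u - v) ^ 2 = 0 := le_antisymm h3 (sq_nonneg _)
  have h5 : 2 * x - u - v = 0 := by
    exact pow_eq_zero_iff (by norm_num) |>.mp h4
  linarith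

lemma edge_alg {a v x : ℝ} (hav : a < v) (hxv : x < v) (h2a : 2 * a ≤ x + v)
    (h : (x - a) ^ 3 + (v - x) ^ 3 / 4
      ≤ ((2 * a + v) / 3 - a) ^ 3 + (v - (2 * a + v) / 3) ^ 3 / 4) :
    3 * x = 2 * a + v := by
  have key : (x - a) ^ 3 + (v - x) ^ 3 / 4
      - (((2 * a + v) / 3 - a) ^ 3 + (v - (2 * a + v) / 3) ^ 3 / 4)
      = (3 / 4) * (x - (2 * a + v) / 3) ^ 2 * (2 * (v - a) + (x - (2 * a + v) / 3)) := by
    ring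
  have hpos : 0 < 2 * (v - a) + (x - (2 * a + v) / 3) := by linarith
  have h2 : (3 / 4) * (x - (2 * a + v) / 3) ^ 2 * (2 * (v - a) + (x - (2 * a + v) / 3)) ≤ 0 := by
    linarith [key ▸ sub_nonpos.mpr h]
  have h3 : (x - (2 * a + v) / 3) ^ 2 ≤ 0 := by nlinarith [sq_nonneg (x - (2 * a + v) / 3)]
  have h4 : x - (2 * a + v) / 3 = 0 := by
    have := le_antisymm h3 (sq_nonneg _)
    exact pow_eq_zero_iff (by norm_num) |>.mp this
  linarith

/- ### Monotonicity of updated configurations -/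

lemma update_mono {m k : ℕ} {c : ℕ → ℝ} (hmono : ∀ i j, i < j → j ≤ m + 1 → c i < c j)
    (hk : k ≤ m) {s : ℝ} (hs1 : 0 < k → c (k - 1) < s) (hs2 : s < c (k + 1)) :
    ∀ i j, i < j → j ≤ m + 1 → Function.update c k s i < Function.update c k s j := by
  have hmono_le : ∀ i j, i ≤ j → j ≤ m + 1 → c i ≤ c j := by
    intro i j hij hj
    rcases eq_or_lt_of_le hij with rfl | h
    · exact le_rfl
    · exact (hmono _ _ h hj).le
  intro i j hij hj
  simp only [Function.update_apply]
  split_ifs with h1 h2 h2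
  · omega
  · subst h1
    exact lt_of_lt_of_le hs2 (hmono_le (i + 1) j (by omega) hj)
  · subst h2
    exact lt_of_le_of_lt (hmono_le i (j - 1) (by omega) (by omega)) (hs1 (by omega))
  · exact hmono i j hij hj

theorem stmt_4 (a b t : ℝ) (hab : a < b) (ht : 0 < t) (n : ℕ) (hn : 0 < n)
    (p : Fin n → ℝ) (hmono : StrictMono p) (hlt : ∀ j, p j < b)
    (hmin : ∀ γ : Set ℝ, γ.Finite → γ.ncard = n + 1 → b ∈ γ →
      distortion (unif a b t) (Set.range p ∪ {b}) ≤ distortion (unif a b t) γ) :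
    (∀ j : ℕ, (h : j + 1 < n) →
      p ⟨j + 1, h⟩ - p ⟨j, by omega⟩ = 2 * (p ⟨0, hn⟩ - a)) ∧
    b - p ⟨n - 1, by omega⟩ = 2 * (p ⟨0, hn⟩ - a) ∧
    (∀ j : Fin n, p j =
      a + (2 * ((j : ℕ) : ℝ) + 1) * ((p ⟨n - 1, by omega⟩ + b) / 2 - a) / (2 * n)) := by
  obtain ⟨m, rfl⟩ : ∃ m, n = m + 1 := ⟨n - 1, by omega⟩
  set c : ℕ → ℝ := fun j => if h : j < m + 1 then p ⟨j, h⟩ else b with hcdef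
  have hcp : ∀ j (h : j < m + 1), c j = p ⟨j, h⟩ := fun j h => by rw [hcdef]; exact dif_pos h
  have hcb : c (m + 1) = b := by simp [hcdef]
  have hmono_c : ∀ i j, i < j → j ≤ m + 1 → c i < c j := by
    intro i j hij hj
    rcases eq_or_lt_of_le hj with rfl | hjlt
    · rw [hcb, hcp i (by omega)]; exact hlt _
    · rw [hcp i (by omega), hcp j hjlt]
      exact hmono (show (⟨i, by omega⟩ : Fin (m + 1)) < ⟨j, hjlt⟩ from hij)
  have hset : Set.range p ∪ {b} = c '' Set.Iic (m + 1) := by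
    ext x
    simp only [Set.mem_union, Set.mem_range, Set.mem_singleton_iff, Set.mem_image, Set.mem_Iic]
    constructor
    · rintro (⟨j, rfl⟩ | rfl)
      · exact ⟨j.1, by omega, by rw [hcp j.1 j.isLt]⟩
      · exact ⟨m + 1, le_rfl, hcb⟩
    · rintro ⟨j, hj, rfl⟩
      rcases Nat.lt_or_ge j (m + 1) with h | h
      · exact Or.inl ⟨⟨j, h⟩, (hcp j h).symm⟩
      · right
        have : j = m + 1 := by omega
        rw [this, hcb]
  have hmin' : ∀ γ : Set ℝ, γ.Finite → γ.ncard = m + 2 → b ∈ γ →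
      distortion (unif a b t) (c '' Set.Iic (m + 1)) ≤ distortion (unif a b t) γ := by
    intro γ h1 h2 h3
    rw [← hset]
    exact hmin γ h1 (by omega) h3
  have ha0 : 2 * a ≤ c 0 + c 1 := key_ha a b t hab ht m c hmono_c hcb hmin'
  have pert : ∀ k ≤ m, ∀ s : ℝ, (0 < k → c (k - 1) < s) → s < c (k + 1) →
      (2 * a ≤ Function.update c k s 0 + Function.update c k s 1) →
      (c 0 - a) ^ 3 + (1 / 4) * ∑ j ∈ Finset.range (m + 1), (c (j + 1) - c j) ^ 3
        ≤ (Function.update c k s 0 - a) ^ 3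
          + (1 / 4) * ∑ j ∈ Finset.range (m + 1),
              (Function.update c k s (j + 1) - Function.update c k s j) ^ 3 := by
    intro k hk s hs1 hs2 ha'
    have hmono' := update_mono hmono_c hk hs1 hs2
    have hcb' : Function.update c k s (m + 1) = b := by
      rw [Function.update_of_ne (by omega), hcb]
    have h3 := hmin' (Function.update c k s '' Set.Iic (m + 1)) ((Set.finite_Iic _).image _)
      (ncard_image_Iic m _ hmono') ⟨m + 1, by simp, hcb'⟩
    rw [distortion_formula hab ht m c hmono_c hcb ha0,
      distortion_formula hab ht m _ hmono' hcb' ha'] at h3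
    have h4 := le_of_mul_le_mul_left h3 ht
    linarith
  have hc01 : c 0 < c 1 := hmono_c 0 1 (by omega) (by omega)
  have hav : a < c 1 := by linarith
  have h0 : 3 * c 0 = 2 * a + c 1 := by
    have hs2 : (2 * a + c 1) / 3 < c (0 + 1) := by
      show (2 * a + c 1) / 3 < c 1
      linarith
    have ha' : 2 * a ≤ Function.update c 0 ((2 * a + c 1) / 3) 0
        + Function.update c 0 ((2 * a + c 1) / 3) 1 := by
      rw [Function.update_self, Function.update_of_ne (by omega)]
      linarith
    have hineq := pert 0 (Nat.zero_le m) ((2 * a + c 1) / 3)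
      (fun h => absurd h (lt_irrefl 0)) hs2 ha'
    rw [sum_update_zero] at hineq
    rw [Function.update_self] at hineq
    refine edge_alg hav hc01 ha0 ?_
    have hrw : ((2 * a + c 1) / 3 - a) ^ 3 = ((2 * a + c 1) / 3 - a) ^ 3 := rfl
    nlinarith [hineq]
  have hc0a : a < c 0 := by linarith
  have hmid : ∀ k, 1 ≤ k → k ≤ m → 2 * c k = c (k - 1) + c (k + 1) := by
    intro k hk1 hk2
    have hu : c (k - 1) < c k := hmono_c (k - 1) k (by omega) (by omega)
    have hv : c k < c (k + 1) := hmono_c k (k + 1) (by omega) (by omega)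
    have hs1 : c (k - 1) < (c (k - 1) + c (k + 1)) / 2 := by linarith
    have hs2 : (c (k - 1) + c (k + 1)) / 2 < c (k + 1) := by linarith
    have ha' : 2 * a ≤ Function.update c k ((c (k - 1) + c (k + 1)) / 2) 0
        + Function.update c k ((c (k - 1) + c (k + 1)) / 2) 1 := by
      rcases eq_or_ne k 1 with rfl | hk1'
      · rw [Function.update_of_ne (by omega), Function.update_self]
        have h1 : c (1 - 1) < (c (1 - 1) + c (1 + 1)) / 2 := hs1
        have h2 : c 0 < (c 0 + c 2) / 2 := h1
        linarith
      · rw [Function.update_of_ne (by omega), Function.update_of_ne (Ne.symm hk1')]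
        exact ha0
    have hineq := pert k hk2 ((c (k - 1) + c (k + 1)) / 2) (fun _ => hs1) hs2 ha'
    rw [sum_update_mid m k hk1 hk2] at hineq
    rw [Function.update_of_ne (by omega)] at hineq
    have hfin2 : (c k - c (k - 1)) ^ 3 + (c (k + 1) - c k) ^ 3
        ≤ ((c (k - 1) + c (k + 1)) / 2 - c (k - 1)) ^ 3
          + (c (k + 1) - (c (k - 1) + c (k + 1)) / 2) ^ 3 := by linarith
    have := interior_alg hu hv hfin2
    linarith
  have hgap : ∀ j, j ≤ m → c (j + 1) - c j = c 1 - c 0 := by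
    intro j
    induction j with
    | zero => intro _; rfl
    | succ i ih =>
        intro hi
        have h1 := hmid (i + 1) (by omega) hi
        have h2 : i + 1 - 1 = i := by omega
        rw [h2] at h1
        have h3 := ih (by omega)
        linarith
  have hcj : ∀ j, j ≤ m + 1 → c j = c 0 + j * (c 1 - c 0) := by
    intro j
    induction j with
    | zero => intro _; simp
    | succ i ih =>
        intro hi
        have h1 := hgap i (by omega)
        have h2 := ih (by omega)
        push_cast
        linarith
  refine ⟨?_, ?_, ?_⟩
  · intro j h
    have e1 : p ⟨j + 1, h⟩ = c (j + 1) := (hcp (j + 1) h).symm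
    have e2 : p ⟨j, by omega⟩ = c j := (hcp j (by omega)).symm
    have e3 : p ⟨0, hn⟩ = c 0 := (hcp 0 hn).symm
    rw [e1, e2, e3, hgap j (by omega)]
    linarith
  · have e2 : p ⟨m + 1 - 1, by omega⟩ = c m := (hcp m (by omega)).symm
    have e3 : p ⟨0, hn⟩ = c 0 := (hcp 0 hn).symm
    rw [e2, e3]
    have h1 := hgap m le_rfl
    rw [hcb] at h1
    linarith
  · intro j
    have e1 : p j = c j.1 := by rw [hcp j.1 j.isLt]
    have e2 : p ⟨m + 1 - 1, by omega⟩ = c m := (hcp m (by omega)).symm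
    rw [e1, e2]
    have h1 := hcj j.1 (by omega)
    have h2 := hcj m (by omega)
    have h3 := hcj (m + 1) le_rfl
    rw [hcb] at h3
    rw [h1, h2]
    have hm1 : ((m : ℝ) + 1) ≠ 0 := by positivity
    push_cast at h3 ⊢
    field_simp
    nlinarith [h0, h3, sq_nonneg ((j:ℝ))]
end
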